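/- Let X, Y be discrete random variables on ℕ with Supp(X) ⊆ Supp(Y) ⊆ ℕ such that l(x) = f_X(x)/f_Y(x) is logconcave and positive on {0,...,u_X}, u_X < u_Y (u_Y possibly infinite), and l(1)/l(0) > 1. Then X ≤_hr Y if and only if l(0) ≥ 1. -/

import Mathlib

private lemma shift_summable (f : ℕ → ℝ) (hf : Summable f) (x : ℕ) :
    Summable (fun i => f (x + i)) :=
  hf.comp_injective (add_right_injective x)

private lemma S_rec (f : ℕ → ℝ) (hf : Summable f) (x : ℕ) :
    ∑' i : ℕ, f (x + i) = f x + ∑' i : ℕ, f (x + 1 + i) := by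
  rw [Summable.tsum_eq_zero_add (shift_summable f hf x)]
  simp only [add_zero]
  congr 1
  exact tsum_congr fun i => by congr 1; omega

private lemma S_head (f : ℕ → ℝ) (hf : Summable f) (x : ℕ) :
    ∑ j ∈ Finset.range x, f j + ∑' i : ℕ, f (x + i) = ∑' j, f j := by
  rw [← Summable.sum_add_tsum_nat_add x hf]
  congr 1
  exact tsum_congr fun i => by congr 1; omega



/-- Proposition 2(ii.a): let `X, Y` have supports `{0,…,u_X} ⊆ Supp(Y) = {0,…,u_Y}`
with `u_X < u_Y` (`u_Y` possibly infinite), suppose the likelihood ratio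
`l x = f x / g x` is logconcave and positive on `{0,…,u_X}` and `l 1 / l 0 > 1`.
Then `X ≤_hr Y` (the survival ratio `S_X/S_Y` is nonincreasing where `S_Y > 0`)
iff `l 0 ≥ 1`. -/
theorem logconcave_lr_hr_iff
    (f g : ℕ → ℝ) (hf0 : ∀ x, 0 ≤ f x) (hg0 : ∀ x, 0 ≤ g x)
    (hfsum : Summable f) (hgsum : Summable g)
    (hf1 : ∑' x : ℕ, f x = 1) (hg1 : ∑' x : ℕ, g x = 1)
    (uX : ℕ) (uY : ℕ∞) (huXY : (uX : ℕ∞) < uY)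
    (hsuppX : ∀ x : ℕ, 0 < f x ↔ x ≤ uX)
    (hsuppY : ∀ x : ℕ, 0 < g x ↔ (x : ℕ∞) ≤ uY)
    (hlc : ∀ x : ℕ, 1 ≤ x → x + 1 ≤ uX →
      (f (x + 1) / g (x + 1)) * (f (x - 1) / g (x - 1)) ≤ (f x / g x) ^ 2)
    (hratio : 1 < (f 1 / g 1) / (f 0 / g 0))
    (SX SY : ℕ → ℝ)
    (hSX : ∀ x, SX x = ∑' i : ℕ, f (x + i))
    (hSY : ∀ x, SY x = ∑' i : ℕ, g (x + i)) :
    (∀ x y : ℕ, x ≤ y → 0 < SY y → SX y / SY y ≤ SX x / SY x) ↔ 1 ≤ f 0 / g 0 := by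
  -- positivity facts
  have hgpos : ∀ n : ℕ, n ≤ uX + 1 → 0 < g n := by
    intro n hn
    refine (hsuppY n).2 ?_
    have h1 : (n : ℕ∞) ≤ (uX : ℕ∞) + 1 := by exact_mod_cast hn
    exact h1.trans (Order.add_one_le_of_lt huXY)
  have hfpos : ∀ n : ℕ, n ≤ uX → 0 < f n := fun n hn => (hsuppX n).2 hn
  have hfzero : ∀ n : ℕ, uX < n → f n = 0 := by
    intro n hn
    refine le_antisymm ?_ (hf0 n)
    refine le_of_not_gt fun h => ?_
    exact absurd ((hsuppX n).1 h) (by omega)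
  have hg0pos : 0 < g 0 := hgpos 0 (by omega)
  have hf0pos : 0 < f 0 := hfpos 0 (by omega)
  -- uX ≥ 1
  have huX1 : 1 ≤ uX := by
    by_contra h
    have : f 1 = 0 := hfzero 1 (by omega)
    rw [this] at hratio
    rw [zero_div, zero_div] at hratio
    norm_num at hratio
  have hg1pos : 0 < g 1 := hgpos 1 (by omega)
  have hf1pos : 0 < f 1 := hfpos 1 huX1
  -- the survival recurrences
  have hSXr : ∀ x, SX x = f x + SX (x + 1) := by
    intro x; rw [hSX, hSX]; exact S_rec f hfsum x
  have hSYr : ∀ x, SY x = g x + SY (x + 1) := by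
    intro x; rw [hSY, hSY]; exact S_rec g hgsum x
  have hSXnn : ∀ x, 0 ≤ SX x := fun x => by
    rw [hSX]; exact tsum_nonneg fun i => hf0 _
  have hSYnn : ∀ x, 0 ≤ SY x := fun x => by
    rw [hSY]; exact tsum_nonneg fun i => hg0 _
  have hSX0 : SX 0 = 1 := by
    rw [hSX]; simpa using hf1
  have hSY0 : SY 0 = 1 := by
    rw [hSY]; simpa using hg1
  constructor
  · -- forward direction
    intro h
    have hSY1 : 0 < SY 1 := by
      rw [hSY]
      calc (0:ℝ) < g 1 := hg1pos
        _ = g (1 + 0) := by norm_num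
        _ ≤ ∑' i : ℕ, g (1 + i) := Summable.le_tsum (shift_summable g hgsum 1) 0 fun j _ => hg0 _
    have h01 := h 0 1 (by omega) hSY1
    rw [hSX0, hSY0, div_one] at h01
    have hle : SX 1 ≤ SY 1 := by
      rw [div_le_one hSY1] at h01; exact h01
    have e1 : SX 1 = 1 - f 0 := by
      have := hSXr 0; rw [hSX0] at this; linarith
    have e2 : SY 1 = 1 - g 0 := by
      have := hSYr 0; rw [hSY0] at this; linarith
    rw [one_le_div hg0pos]
    rw [e1, e2] at hle; linarith
  · -- backward direction
    intro hl0
    have hg0f0 : g 0 ≤ f 0 := (one_le_div hg0pos).1 hl0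
    -- the key single-step inequality
    have key : ∀ x : ℕ, SX (x + 1) * g x ≤ f x * SY (x + 1) := by
      intro x
      by_cases hxuX : x ≤ uX
      swap
      · -- x > uX : SX (x+1) = 0
        have : SX (x + 1) = 0 := by
          rw [hSX]
          convert tsum_zero with i
          exact hfzero _ (by omega)
        rw [this, zero_mul]
        exact mul_nonneg (hf0 x) (hSYnn _)
      rcases eq_or_lt_of_le hxuX with hxeq | hxlt
      · -- x = uX : SX (x+1) = 0
        have : SX (x + 1) = 0 := by
          rw [hSX]
          convert tsum_zero with i
          exact hfzero _ (by omega)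
        rw [this, zero_mul]
        exact mul_nonneg (hf0 x) (hSYnn _)
      -- now x < uX
      by_cases hdec : f (x + 1) * g x ≤ f x * g (x + 1)
      · -- decreasing case: l (x+1) ≤ l x, so l i ≤ l x for all i > x
        have R : ∀ i : ℕ, f (x + 1 + i) * g (x + i) ≤ f (x + i) * g (x + 1 + i) := by
          intro i
          induction i with
          | zero => simpa using hdec
          | succ i ih =>
            rw [show x + (i+1) = x + 1 + i from by omega,
                show x + 1 + (i+1) = x + 1 + i + 1 from by omega]
            by_cases hi : x + 1 + i + 1 ≤ uX
            · have hl := hlc (x + 1 + i) (by omega) hi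
              rw [show x + 1 + i - 1 = x + i from by omega] at hl
              have hfa : 0 < f (x + 1 + i) := hfpos _ (by omega)
              have hfb : 0 < f (x + i) := hfpos _ (by omega)
              have hga : 0 < g (x + 1 + i) := hgpos _ (by omega)
              have hgb : 0 < g (x + i) := hgpos _ (by omega)
              have hgc : 0 < g (x + 1 + i + 1) := hgpos _ (by omega)
              rw [div_mul_div_comm, div_pow, div_le_div_iff₀ (by positivity) (by positivity)] at hl
              nlinarith [mul_le_mul_of_nonneg_right ih (le_of_lt (mul_pos hfa hgc)),
                mul_pos hfb hga, mul_pos hgb hgc, hf0 (x+1+i+1)]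
            · have h0 : f (x + 1 + i + 1) = 0 := hfzero _ (by omega)
              rw [h0, zero_mul]
              exact mul_nonneg (hf0 _) (hg0 _)
        have Q : ∀ i : ℕ, f (x + 1 + i) * g x ≤ f x * g (x + 1 + i) := by
          intro i
          induction i with
          | zero => simpa using hdec
          | succ i ih =>
            rw [show x + 1 + (i+1) = x + 1 + i + 1 from by omega]
            by_cases hi : x + 1 + i + 1 ≤ uX
            · have hR := R (i + 1)
              rw [show x + (i+1) = x + 1 + i from by omega,
                  show x + 1 + (i+1) = x + 1 + i + 1 from by omega] at hR
              have hga : 0 < g (x + 1 + i) := hgpos _ (by omega)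
              have hgc : 0 < g (x + 1 + i + 1) := hgpos _ (by omega)
              have hgx : 0 < g x := hgpos _ (by omega)
              nlinarith [mul_le_mul_of_nonneg_right hR (le_of_lt hgx),
                mul_le_mul_of_nonneg_right ih (le_of_lt hgc), hf0 (x+1+i+1)]
            · have h0 : f (x + 1 + i + 1) = 0 := hfzero _ (by omega)
              rw [h0, zero_mul]
              exact mul_nonneg (hf0 _) (hg0 _)
        -- sum up
        calc SX (x + 1) * g x = ∑' i : ℕ, f (x + 1 + i) * g x := by
              rw [hSX, tsum_mul_right]
          _ ≤ ∑' i : ℕ, f x * g (x + 1 + i) := by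
              refine Summable.tsum_le_tsum Q ((shift_summable f hfsum (x+1)).mul_right _)
                ((shift_summable g hgsum (x+1)).mul_left _)
          _ = f x * SY (x + 1) := by rw [hSY, tsum_mul_left]
      · -- increasing case: l x < l (x+1), so l nondecreasing on [0, x+1]
        push_neg at hdec
        have D : ∀ k : ℕ, k ≤ x → f (x - k) * g (x - k + 1) ≤ f (x - k + 1) * g (x - k) := by
          intro k
          induction k with
          | zero => intro _; simpa using le_of_lt hdec
          | succ k ih =>
            intro hk
            have ih' := ih (by omega)
            set a := x - (k + 1) with ha
            have hxk : x - k = a + 1 := by omega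
            rw [hxk] at ih'
            have hl := hlc (a + 1) (by omega) (by omega)
            rw [show a + 1 - 1 = a from by omega] at hl
            have hfa : 0 < f a := hfpos _ (by omega)
            have hfb : 0 < f (a + 1) := hfpos _ (by omega)
            have hfc : 0 < f (a + 1 + 1) := hfpos _ (by omega)
            have hga : 0 < g a := hgpos _ (by omega)
            have hgb : 0 < g (a + 1) := hgpos _ (by omega)
            have hgc : 0 < g (a + 1 + 1) := hgpos _ (by omega)
            rw [div_mul_div_comm, div_pow, div_le_div_iff₀ (by positivity) (by positivity)] at hl
            nlinarith [mul_le_mul_of_nonneg_right ih' (le_of_lt (mul_pos hfa hgb)),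
              mul_pos hfa hgb, mul_pos hfb hgc]
        -- consecutive ratio comparisons for all j ≤ x
        have D' : ∀ j : ℕ, j ≤ x → f j * g (j + 1) ≤ f (j + 1) * g j := by
          intro j hj
          have := D (x - j) (by omega)
          rw [show x - (x - j) = j from by omega] at this
          exact this
        have E : ∀ j : ℕ, j ≤ x + 1 → g j ≤ f j := by
          have F : ∀ j : ℕ, j ≤ x + 1 → f 0 * g j ≤ f j * g 0 := by
            intro j
            induction j with
            | zero => intro _; exact le_refl _
            | succ j ih =>
              intro hj
              have ih' := ih (by omega)
              have hD := D' j (by omega)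
              have hfj : 0 < f j := hfpos _ (by omega)
              have hgj : 0 < g j := hgpos _ (by omega)
              nlinarith [mul_le_mul_of_nonneg_right ih' (le_of_lt hfj),
                mul_le_mul_of_nonneg_left hD (le_of_lt hf0pos), hg0 (j+1), hf0 (j+1)]
          intro j hj
          have hF := F j hj
          have : f 0 * g j ≤ f j * f 0 := hF.trans
            (mul_le_mul_of_nonneg_left hg0f0 (hf0 j))
          nlinarith [hf0pos]
        -- SX (x+1) ≤ SY (x+1)
        have hSle : SX (x + 1) ≤ SY (x + 1) := by
          have e1 : ∑ j ∈ Finset.range (x+1), f j + SX (x + 1) = 1 := by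
            rw [hSX, S_head f hfsum, hf1]
          have e2 : ∑ j ∈ Finset.range (x+1), g j + SY (x + 1) = 1 := by
            rw [hSY, S_head g hgsum, hg1]
          have hsum : ∑ j ∈ Finset.range (x+1), g j ≤ ∑ j ∈ Finset.range (x+1), f j := by
            refine Finset.sum_le_sum fun j hj => E j ?_
            have := Finset.mem_range.1 hj; omega
          linarith
        have hgxfx : g x ≤ f x := E x (by omega)
        calc SX (x + 1) * g x ≤ SY (x + 1) * f x :=
              mul_le_mul hSle hgxfx (hg0 x) (hSYnn _)
          _ = f x * SY (x + 1) := mul_comm _ _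
    -- now derive the monotonicity
    intro x y hxy hy
    induction y, hxy using Nat.le_induction with
    | base => exact le_refl _
    | succ y hxy ih =>
      have hSYy : 0 < SY y := by
        have := hSYr y; have := hg0 y; linarith
      refine le_trans ?_ (ih hSYy)
      rw [div_le_div_iff₀ hy hSYy]
      rw [hSXr y, hSYr y, mul_add, add_mul]
      exact add_le_add_left (key y) _
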